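/- Let T be a finite tree with positive edge weights and ρ > 0 under the postal model. If (u,v) ∈ E(T) and b_time(u, B(u,v)) ≤ b_time(v, B(v,u)), then b_time(v, T) ≤ b_time(u, T). -/

import Mathlib

/-!
Common definitions for the postal-model broadcasting problem on weighted trees.
-/

open SimpleGraph

namespace Postal

attribute [local instance] Classical.propDecidable

variable {V : Type*} [Fintype V] [DecidableEq V] (G : SimpleGraph V)

/-- The unique path (as a walk) between two vertices of a tree. -/
noncomputable def tPath (hG : G.IsTree) (u v : V) : G.Walk u v :=
  (hG.existsUnique_path u v).exists.choose

/-- `z` lies in the open branch `O(x,y)`: the component of `T - x` containing `y`. -/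
def inO (x y z : V) : Prop := ∃ p : G.Walk y z, x ∉ p.support

/-- The open branch `O(x,y)`. -/
def Obr (x y : V) : Set V := {z | inO G x y z}

/-- The closed branch `B(x,y) = T - O(x,y)` (it contains `x`). -/
def Bbr (x y : V) : Set V := {z | ¬ inO G x y z}

/-- The parent of `z` with respect to the root `u`: the penultimate vertex on the
unique `u`-to-`z` path. -/
noncomputable def parent (hG : G.IsTree) (u z : V) : V :=
  (tPath G hG u z).getVert ((tPath G hG u z).length - 1)

/-- The receive time of `z` under schedule `σ` when `u` originates the message:
along the unique `u`-to-`z` path, each vertex is contacted in its slot `σ`,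
contributing `σ·ρ` connection time plus the edge weight. -/
noncomputable def recvTime (hG : G.IsTree) (w : V → V → ℝ) (ρ : ℝ) (σ : V → ℕ) (u z : V) : ℝ :=
  ((tPath G hG u z).darts.map (fun d => (σ d.toProd.2 : ℝ) * ρ + w d.toProd.1 d.toProd.2)).sum

/-- A schedule `σ` is valid for source `u` broadcasting over the vertex set `S`:
every non-source vertex gets a slot `≥ 1`, and distinct vertices with the same
parent get distinct slots (a sender contacts its neighbors sequentially). -/
def Valid (hG : G.IsTree) (σ : V → ℕ) (u : V) (S : Set V) : Prop :=
  (∀ z ∈ S, z ≠ u → 1 ≤ σ z) ∧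
  (∀ z₁ ∈ S, ∀ z₂ ∈ S, z₁ ≠ u → z₂ ≠ u → z₁ ≠ z₂ →
    parent G hG u z₁ = parent G hG u z₂ → σ z₁ ≠ σ z₂)

/-- The minimum broadcast time for `u` to broadcast a message over the subtree
induced by `S` under the postal model with latency `ρ`. -/
noncomputable def bTime (hG : G.IsTree) (w : V → V → ℝ) (ρ : ℝ) (u : V) (S : Set V) : ℝ :=
  sInf {m | ∃ σ, Valid G hG σ u S ∧ m = sSup ((recvTime G hG w ρ σ u) '' S)}

/-- Broadcast time over the whole tree. -/
noncomputable def bTimeT (hG : G.IsTree) (w : V → V → ℝ) (ρ : ℝ) (u : V) : ℝ :=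
  bTime G hG w ρ u Set.univ

/-- The set of broadcast centers. -/
def BCtr (hG : G.IsTree) (w : V → V → ℝ) (ρ : ℝ) : Set V :=
  {u | ∀ v, bTimeT G hG w ρ u ≤ bTimeT G hG w ρ v}

/-- A prime broadcast center. -/
def IsPrime (hG : G.IsTree) (w : V → V → ℝ) (ρ : ℝ) (κ : V) : Prop :=
  κ ∈ BCtr G hG w ρ ∧
  ∀ u, G.Adj κ u → bTime G hG w ρ u (Bbr G u κ) ≤ bTime G hG w ρ κ (Bbr G κ u)

/-- Hop distance: number of edges on the unique path. -/
noncomputable def hop (hG : G.IsTree) (x y : V) : ℕ := (tPath G hG x y).length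

/-- Total weight of the unique `x`-to-`y` path. -/
noncomputable def pw (hG : G.IsTree) (w : V → V → ℝ) (x y : V) : ℝ :=
  ((tPath G hG x y).darts.map (fun d => w d.toProd.1 d.toProd.2)).sum

/-- Symmetric weight function. -/
def Wsymm (w : V → V → ℝ) : Prop := ∀ a b, w a b = w b a

/-- Positive weights on edges. -/
def Wpos (w : V → V → ℝ) : Prop := ∀ a b, G.Adj a b → 0 < w a b

/-- A scenario: a symmetric weight assignment within the uncertainty intervals. -/
def Scenario (lo hi : V → V → ℝ) (w : V → V → ℝ) : Prop :=
  (∀ a b, w a b = w b a) ∧ ∀ a b, G.Adj a b → lo a b ≤ w a b ∧ w a b ≤ hi a b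

/-- The maximum regret of `x`. -/
noncomputable def maxRegret (hG : G.IsTree) (lo hi : V → V → ℝ) (ρ : ℝ) (x : V) : ℝ :=
  sSup {r | ∃ w y, Scenario G lo hi w ∧ r = bTimeT G hG w ρ x - bTimeT G hG w ρ y}

/-- `w` is a worst-case scenario of the tree with respect to `x`. -/
def WorstCase (hG : G.IsTree) (lo hi : V → V → ℝ) (ρ : ℝ) (x : V) (w : V → V → ℝ) : Prop :=
  Scenario G lo hi w ∧
  ∃ y, bTimeT G hG w ρ x - bTimeT G hG w ρ y = maxRegret G hG lo hi ρ x

/-- An edge `(a,b)` lies on the unique `x`-to-`y` path. -/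
def onPath (hG : G.IsTree) (x y a b : V) : Prop :=
  a ∈ (tPath G hG x y).support ∧ b ∈ (tPath G hG x y).support

/-- The base scenario `α_{x,y}`: weight `hi` on the `x`-to-`y` path and on edges of
`B(y,x)`, weight `lo` elsewhere. -/
noncomputable def baseScenario (hG : G.IsTree) (lo hi : V → V → ℝ) (x y : V) : V → V → ℝ :=
  fun a b =>
    if onPath G hG x y a b ∨ (a ∈ Bbr G y x ∧ b ∈ Bbr G y x) then hi a b else lo a b

/-- The value `w(y,v) + b_time(v, B(v,y))` of a neighbor `v` of `y`. -/
noncomputable def nval (hG : G.IsTree) (w : V → V → ℝ) (ρ : ℝ) (y v : V) : ℝ :=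
  w y v + bTime G hG w ρ v (Bbr G v y)

/-- Scenario `β^j_{x,y}`: agrees with `α_{x,y}`, except that every edge in
`{(y,u_k)} ∪ E(B(u_k,y))` for `k > j` (with `u` the 1-based sorted enumeration
of the neighbors of `y` in `B(y,x)`) gets weight `lo`. -/
noncomputable def betaScenario (hG : G.IsTree) (lo hi : V → V → ℝ) (x y : V) {h : ℕ}
    (u : Fin h → V) (j : ℕ) : V → V → ℝ :=
  fun a b =>
    if ∃ k : Fin h, j < (k : ℕ) + 1 ∧
        ((a = y ∧ b = u k) ∨ (b = y ∧ a = u k) ∨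
          (a ∈ Bbr G (u k) y ∧ b ∈ Bbr G (u k) y)) then
      lo a b
    else baseScenario G hG lo hi x y a b

/-- Scenario `γ^j_{x,y}`: agrees with `α_{x,y}` on the edges in
`⋃_{1 ≤ k ≤ j} ({(y,u_k)} ∪ E(B(u_k,y)))` and with the scenario `s` elsewhere. -/
noncomputable def gammaScenario (hG : G.IsTree) (lo hi : V → V → ℝ) (s : V → V → ℝ)
    (x y : V) {h : ℕ} (u : Fin h → V) (j : ℕ) : V → V → ℝ :=
  fun a b =>
    if ∃ k : Fin h, (k : ℕ) + 1 ≤ j ∧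
        ((a = y ∧ b = u k) ∨ (b = y ∧ a = u k) ∨
          (a ∈ Bbr G (u k) y ∧ b ∈ Bbr G (u k) y)) then
      baseScenario G hG lo hi x y a b
    else s a b

/-- The set of neighbors of `y` inside the branch `B(y,x)`. -/
def nbrIn (x y : V) : Set V := {v | G.Adj y v ∧ v ∈ Bbr G y x}



/-! ### Auxiliary lemmas -/

section Aux

variable (hG : G.IsTree)

lemma tPath_isPath (u v : V) : (tPath G hG u v).IsPath :=
  (hG.existsUnique_path u v).exists.choose_spec

lemma tPath_unique {u v : V} (p : G.Walk u v) (hp : p.IsPath) : p = tPath G hG u v :=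
  (hG.existsUnique_path u v).unique hp (tPath_isPath G hG u v)

lemma tPath_nil (u : V) : tPath G hG u u = Walk.nil :=
  (tPath_unique G hG Walk.nil (Walk.IsPath.nil)).symm

lemma recvTime_self (w : V → V → ℝ) (ρ : ℝ) (σ : V → ℕ) (u : V) :
    recvTime G hG w ρ σ u u = 0 := by
  unfold recvTime
  rw [tPath_nil]
  simp

lemma self_mem_Bbr (x y : V) : x ∈ Bbr G x y := by
  rintro ⟨p, hp⟩
  exact hp p.end_mem_support

lemma not_mem_Bbr_self {x y : V} (hxy : x ≠ y) : y ∉ Bbr G x y := by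
  intro h
  exact h ⟨Walk.nil, by simp [hxy]⟩

lemma support_mem_Bbr {x y z : V} (hz : z ∈ Bbr G x y) {c : V}
    (hc : c ∈ (tPath G hG x z).support) (hcx : c ≠ x) : c ∈ Bbr G x y := by
  rintro ⟨q, hq⟩
  apply hz
  refine ⟨q.append ((tPath G hG x z).dropUntil c hc), ?_⟩
  rw [Walk.mem_support_append_iff]
  push_neg
  refine ⟨hq, ?_⟩
  intro hx
  have hns : (tPath G hG x z).support.Nodup := (tPath_isPath G hG x z).support_nodup
  have hsp := (tPath G hG x z).take_spec hc
  have hns2 : (((tPath G hG x z).takeUntil c hc).support ++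
      ((tPath G hG x z).dropUntil c hc).support.tail).Nodup := by
    rw [← Walk.support_append, hsp]; exact hns
  have h1 : x ∈ ((tPath G hG x z).takeUntil c hc).support := Walk.start_mem_support _
  have h2 : x ∈ ((tPath G hG x z).dropUntil c hc).support.tail := by
    have hec := Walk.support_eq_cons ((tPath G hG x z).dropUntil c hc)
    rw [hec, List.mem_cons] at hx
    rcases hx with h | h
    · exact absurd h.symm hcx
    · exact h
  exact (List.disjoint_of_nodup_append hns2) h1 h2

lemma not_mem_support_tPath {x y z : V} (hxy : x ≠ y) (hz : z ∈ Bbr G x y) :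
    y ∉ (tPath G hG x z).support := fun h =>
  not_mem_Bbr_self G hxy (support_mem_Bbr G hG hz h (Ne.symm hxy))

lemma tPath_cons {u v z : V} (huv : G.Adj u v) (hz : z ∈ Bbr G v u) :
    tPath G hG u z = Walk.cons huv (tPath G hG v z) :=
  (tPath_unique G hG _ ((tPath_isPath G hG v z).cons
    (not_mem_support_tPath G hG huv.ne' hz))).symm

lemma tPath_edge {u v : V} (huv : G.Adj u v) :
    tPath G hG u v = Walk.cons huv Walk.nil :=
  (tPath_unique G hG _ (by simp [Walk.cons_isPath_iff, huv.ne])).symm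

lemma recvTime_cons (w : V → V → ℝ) (ρ : ℝ) (σ : V → ℕ) {u v z : V}
    (huv : G.Adj u v) (hz : z ∈ Bbr G v u) :
    recvTime G hG w ρ σ u z = (σ v : ℝ) * ρ + w u v + recvTime G hG w ρ σ v z := by
  unfold recvTime
  rw [tPath_cons G hG huv hz, Walk.darts_cons, List.map_cons, List.sum_cons]

lemma recvTime_congr (w : V → V → ℝ) (ρ : ℝ) {σ₁ σ₂ : V → ℕ} {x z : V}
    (h : ∀ d ∈ (tPath G hG x z).darts, σ₁ d.toProd.2 = σ₂ d.toProd.2) :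
    recvTime G hG w ρ σ₁ x z = recvTime G hG w ρ σ₂ x z := by
  unfold recvTime
  congr 1
  apply List.map_congr_left
  intro d hd
  rw [h d hd]

lemma parent_cons {u v z : V} (huv : G.Adj u v) (hz : z ∈ Bbr G v u) (hzv : z ≠ v) :
    parent G hG u z = parent G hG v z := by
  have hlen : (tPath G hG v z).length ≠ 0 := fun h =>
    hzv (Walk.eq_of_length_eq_zero h).symm
  obtain ⟨m, hm⟩ := Nat.exists_eq_succ_of_ne_zero hlen
  unfold parent
  rw [tPath_cons G hG huv hz, Walk.length_cons, hm]
  simp only [Nat.add_sub_cancel, Nat.succ_sub_one]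
  exact Walk.getVert_cons_succ _ _

lemma parent_adj {x z : V} (h : G.Adj x z) : parent G hG x z = x := by
  unfold parent
  rw [tPath_edge G hG h]
  simp

lemma adj_of_parent_eq {x z : V} (hzx : z ≠ x) (h : parent G hG x z = x) :
    G.Adj x z := by
  set p := tPath G hG x z with hp
  have hlen : p.length ≠ 0 := fun hl => hzx (Walk.eq_of_length_eq_zero hl).symm
  have hlt : p.length - 1 < p.length := Nat.sub_lt (Nat.pos_of_ne_zero hlen) one_pos
  have := p.adj_getVert_succ hlt
  rw [Nat.sub_add_cancel (Nat.one_le_iff_ne_zero.mpr hlen)] at this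
  rw [p.getVert_length] at this
  unfold parent at h
  rw [← hp] at h
  rwa [h] at this

lemma parent_mem_support (x z : V) :
    parent G hG x z ∈ (tPath G hG x z).support := by
  unfold parent
  rw [Walk.mem_support_iff_exists_getVert]
  exact ⟨(tPath G hG x z).length - 1, rfl, Nat.sub_le _ _⟩

include hG in
lemma mem_Bbr_or {u v : V} (huv : G.Adj u v) (z : V) :
    z ∈ Bbr G u v ∨ z ∈ Bbr G v u := by
  by_cases h : z ∈ Bbr G u v
  · exact Or.inl h
  right
  rintro ⟨r, hr⟩
  have h' : ∃ q : G.Walk v z, u ∉ q.support := not_not.mp h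
  obtain ⟨q, hq⟩ := h'
  have hqb : u ∉ q.bypass.support := fun hh => hq (q.support_bypass_subset hh)
  have hrb : v ∉ r.bypass.support := fun hh => hr (r.support_bypass_subset hh)
  have hpath : (Walk.cons huv q.bypass).IsPath := q.bypass_isPath.cons hqb
  have heq : Walk.cons huv q.bypass = r.bypass := by
    rw [tPath_unique G hG _ hpath, tPath_unique G hG _ r.bypass_isPath]
  apply hrb
  rw [← heq]
  rw [Walk.support_cons, List.mem_cons]
  exact Or.inr (Walk.start_mem_support _)

include hG in
lemma not_mem_Bbr_of {u v z : V} (huv : G.Adj u v) (hz : z ∈ Bbr G v u) :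
    z ∉ Bbr G u v := by
  intro h2
  exact h2 ⟨tPath G hG v z, not_mem_support_tPath G hG huv.ne' hz⟩

lemma valid_mono {σ : V → ℕ} {x : V} {S S' : Set V} (hs : S ⊆ S')
    (h : Valid G hG σ x S') : Valid G hG σ x S :=
  ⟨fun z hz => h.1 z (hs hz), fun z₁ h₁ z₂ h₂ => h.2 z₁ (hs h₁) z₂ (hs h₂)⟩

lemma valid_univ_branch {σ : V → ℕ} {u v : V} (huv : G.Adj u v)
    (h : Valid G hG σ u Set.univ) : Valid G hG σ v (Bbr G v u) := by
  have hune : ∀ z ∈ Bbr G v u, z ≠ u := fun z hz he =>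
    not_mem_Bbr_self G huv.ne' (he ▸ hz)
  constructor
  · intro z hz hzv
    exact h.1 z trivial (hune z hz)
  · intro z₁ h₁ z₂ h₂ hz₁ hz₂ hne hpar
    exact h.2 z₁ trivial z₂ trivial (hune z₁ h₁) (hune z₂ h₂) hne
      (by rw [parent_cons G hG huv h₁ hz₁, parent_cons G hG huv h₂ hz₂, hpar])

/-- A universally valid schedule. -/
noncomputable def injSched : V → ℕ := fun z => ((Fintype.equivFin V) z : ℕ) + 1

lemma valid_injSched (x : V) (S : Set V) : Valid G hG (injSched) x S := by
  constructor
  · intro z _ _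
    exact Nat.le_add_left 1 _
  · intro z₁ _ z₂ _ _ _ hne _ hσ
    apply hne
    simp only [injSched, add_left_inj] at hσ
    exact (Fintype.equivFin V).injective (Fin.ext hσ)

lemma bTime_set_nonempty (w : V → V → ℝ) (ρ : ℝ) (x : V) (S : Set V) :
    {m | ∃ σ, Valid G hG σ x S ∧ m = sSup ((recvTime G hG w ρ σ x) '' S)}.Nonempty :=
  ⟨_, injSched, valid_injSched G hG x S, rfl⟩

lemma bTime_mem_nonneg (w : V → V → ℝ) (ρ : ℝ) {x : V} {S : Set V} (hx : x ∈ S) :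
    ∀ m ∈ {m | ∃ σ, Valid G hG σ x S ∧ m = sSup ((recvTime G hG w ρ σ x) '' S)},
      0 ≤ m := by
  rintro m ⟨σ, hσ, rfl⟩
  have h0 : (0 : ℝ) ∈ (recvTime G hG w ρ σ x) '' S :=
    ⟨x, hx, recvTime_self G hG w ρ σ x⟩
  exact le_csSup ((S.toFinite.image _).bddAbove) h0

lemma bTime_bddBelow (w : V → V → ℝ) (ρ : ℝ) {x : V} {S : Set V} (hx : x ∈ S) :
    BddBelow {m | ∃ σ, Valid G hG σ x S ∧
      m = sSup ((recvTime G hG w ρ σ x) '' S)} :=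
  ⟨0, fun m hm => bTime_mem_nonneg G hG w ρ hx m hm⟩

lemma bTime_nonneg (w : V → V → ℝ) (ρ : ℝ) {x : V} {S : Set V} (hx : x ∈ S) :
    0 ≤ bTime G hG w ρ x S :=
  le_csInf (bTime_set_nonempty G hG w ρ x S) (bTime_mem_nonneg G hG w ρ hx)

end Aux


section Main

variable (hG : G.IsTree)

include hG in
lemma neighbor_mem_Bbr {u v c : V} (huv : G.Adj u v) (hvc : G.Adj v c) (hcu : c ≠ u) :
    c ∈ Bbr G v u := by
  rintro ⟨q, hq⟩
  have hqb : v ∉ q.bypass.support := fun hh => hq (q.support_bypass_subset hh)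
  have hpath : (Walk.cons huv (Walk.cons hvc Walk.nil)).IsPath := by
    simp [Walk.cons_isPath_iff, huv.ne, hvc.ne, Ne.symm hcu]
  have heq := (tPath_unique G hG _ hpath).trans (tPath_unique G hG _ q.bypass_isPath).symm
  apply hqb
  rw [← heq, Walk.support_cons, List.mem_cons]
  exact Or.inr (Walk.start_mem_support _)

lemma le_bTime (w : V → V → ℝ) (ρ : ℝ) {x : V} {S : Set V} {c : ℝ}
    (h : ∀ σ, Valid G hG σ x S → c ≤ sSup ((recvTime G hG w ρ σ x) '' S)) :
    c ≤ bTime G hG w ρ x S :=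
  le_csInf (bTime_set_nonempty G hG w ρ x S) (by rintro m ⟨σ, hσ, rfl⟩; exact h σ hσ)

lemma bTime_le (w : V → V → ℝ) (ρ : ℝ) {x : V} {S : Set V} (hx : x ∈ S)
    {σ : V → ℕ} (hσ : Valid G hG σ x S) :
    bTime G hG w ρ x S ≤ sSup ((recvTime G hG w ρ σ x) '' S) :=
  csInf_le (bTime_bddBelow G hG w ρ hx) ⟨σ, hσ, rfl⟩

include hG in
lemma bTime_lower (w : V → V → ℝ) (ρ : ℝ) (hρ : 0 < ρ) {u v : V} (huv : G.Adj u v) :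
    ρ + w u v + bTime G hG w ρ v (Bbr G v u) ≤ bTimeT G hG w ρ u := by
  apply le_bTime
  intro σ hσ
  set M := sSup ((recvTime G hG w ρ σ u) '' Set.univ) with hM
  have hBv : Valid G hG σ v (Bbr G v u) := valid_univ_branch G hG huv hσ
  have hσv : 1 ≤ σ v := hσ.1 v trivial huv.ne'
  have hkey : ∀ z ∈ Bbr G v u, recvTime G hG w ρ σ v z ≤ M - (ρ + w u v) := by
    intro z hz
    have h1 : recvTime G hG w ρ σ u z ≤ M :=
      le_csSup ((Set.univ.toFinite.image _).bddAbove) ⟨z, trivial, rfl⟩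
    have h2 := recvTime_cons G hG w ρ σ huv hz
    have h4 : (1:ℝ) ≤ (σ v : ℝ) := by exact_mod_cast hσv
    nlinarith
  have hsup : sSup ((recvTime G hG w ρ σ v) '' (Bbr G v u)) ≤ M - (ρ + w u v) :=
    csSup_le ⟨_, ⟨v, self_mem_Bbr G v u, rfl⟩⟩ (by rintro t ⟨z, hz, rfl⟩; exact hkey z hz)
  have hb := bTime_le G hG w ρ (self_mem_Bbr G v u) hBv
  linarith

include hG in
lemma recvTime_shift (w : V → V → ℝ) (ρ : ℝ) {σ' σB : V → ℕ} {v z : V} (hzv : z ≠ v)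
    (h1 : ∀ c, G.Adj v c → c ∈ (tPath G hG v z).support → σ' c = σB c + 1)
    (h2 : ∀ c, c ≠ v → ¬ G.Adj v c → c ∈ (tPath G hG v z).support → σ' c = σB c) :
    recvTime G hG w ρ σ' v z = ρ + recvTime G hG w ρ σB v z := by
  have hp := tPath_isPath G hG v z
  unfold recvTime
  cases hQ : tPath G hG v z with
  | nil => exact absurd rfl hzv
  | @cons _ s _ e q =>
    rw [hQ, Walk.cons_isPath_iff] at hp
    obtain ⟨hqp, hvq⟩ := hp
    rw [hQ] at h1 h2
    have hs : s ∈ (Walk.cons e q).support := by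
      rw [Walk.support_cons]; exact List.mem_cons_of_mem _ q.start_mem_support
    have hσs : σ' s = σB s + 1 := h1 s e hs
    have hint : ∀ d ∈ q.darts, σ' d.toProd.2 = σB d.toProd.2 := by
      intro d hd
      have hd2t : d.toProd.2 ∈ q.support.tail := by
        rw [← Walk.map_snd_darts]; exact List.mem_map_of_mem hd
      have hd2 : d.toProd.2 ∈ q.support := by
        rw [Walk.support_eq_cons q]; exact List.mem_cons_of_mem _ hd2t
      have hdv : d.toProd.2 ≠ v := fun h => hvq (h ▸ hd2)
      have hd2c : d.toProd.2 ∈ (Walk.cons e q).support := by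
        rw [Walk.support_cons]; exact List.mem_cons_of_mem _ hd2
      apply h2 _ hdv _ hd2c
      intro hadj
      have hne_s : d.toProd.2 ≠ s := by
        intro h
        have hnd := hqp.support_nodup
        rw [Walk.support_eq_cons q] at hnd
        exact (List.nodup_cons.mp hnd).1 (h ▸ hd2t)
      have htk : (Walk.cons e (q.takeUntil d.toProd.2 hd2)).IsPath :=
        (hqp.takeUntil hd2).cons (fun hv => hvq (q.support_takeUntil_subset hd2 hv))
      have h1p : Walk.cons hadj Walk.nil = tPath G hG v d.toProd.2 :=
        tPath_unique G hG _ (by simp [Walk.cons_isPath_iff, hadj.ne])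
      have h2p : Walk.cons e (q.takeUntil d.toProd.2 hd2) = tPath G hG v d.toProd.2 :=
        tPath_unique G hG _ htk
      have hlen := congrArg Walk.length (h1p.trans h2p.symm)
      simp only [Walk.length_cons, Walk.length_nil, add_left_inj] at hlen
      exact hne_s (Walk.eq_of_length_eq_zero hlen.symm).symm
    have hmap : q.darts.map (fun d => (σ' d.toProd.2 : ℝ) * ρ + w d.toProd.1 d.toProd.2)
        = q.darts.map (fun d => (σB d.toProd.2 : ℝ) * ρ + w d.toProd.1 d.toProd.2) :=
      List.map_congr_left (fun d hd => by rw [hint d hd])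
    rw [Walk.darts_cons, List.map_cons, List.map_cons, List.sum_cons, List.sum_cons, hmap]
    have : (⟨(v, s), e⟩ : G.Dart).toProd.2 = s := rfl
    rw [this, hσs]
    push_cast
    ring

/-- The combined schedule used to broadcast from `v`. -/
noncomputable def shiftSched (σA σB : V → ℕ) (u v : V) : V → ℕ := fun z =>
  if z = u then 1 else if z ∈ Bbr G v u then
    (if G.Adj v z then σB z + 1 else σB z) else σA z

lemma shiftSched_valid {u v : V} (huv : G.Adj u v) {σA σB : V → ℕ}
    (hA : Valid G hG σA u (Bbr G u v)) (hB : Valid G hG σB v (Bbr G v u)) :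
    Valid G hG (shiftSched G σA σB u v) v Set.univ := by
  have hBu : u ∉ Bbr G v u := not_mem_Bbr_self G huv.ne'
  have hmixed : ∀ z₁ z₂, z₁ ∈ Bbr G v u → z₂ ∈ Bbr G u v → z₂ ≠ u →
      parent G hG v z₁ ≠ v → parent G hG v z₁ = parent G hG v z₂ → False := by
    intro z₁ z₂ hz₁ hz₂ hz₂u hp hpar
    have hpB : parent G hG v z₁ ∈ Bbr G v u :=
      support_mem_Bbr G hG hz₁ (parent_mem_support G hG v z₁) hp
    have hpc : parent G hG v z₂ = parent G hG u z₂ :=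
      parent_cons G hG huv.symm hz₂ hz₂u
    have hpu : parent G hG v z₁ ≠ u := fun h => hBu (h ▸ hpB)
    have hpA : parent G hG v z₁ ∈ Bbr G u v := by
      rw [hpar, hpc]
      exact support_mem_Bbr G hG hz₂ (parent_mem_support G hG u z₂)
        (by rw [← hpc, ← hpar]; exact hpu)
    exact not_mem_Bbr_of G hG huv hpB hpA
  constructor
  · intro z _ hzv
    by_cases hzu : z = u
    · simp [shiftSched, hzu]
    by_cases hzB : z ∈ Bbr G v u
    · have h1 := hB.1 z hzB hzv
      by_cases hadj : G.Adj v z <;> simp [shiftSched, hzu, hzB, hadj] <;> omega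
    · have hzA : z ∈ Bbr G u v := (mem_Bbr_or G hG huv z).resolve_right hzB
      have := hA.1 z hzA hzu
      simpa [shiftSched, hzu, hzB] using this
  · intro z₁ _ z₂ _ h₁v h₂v hne hpar
    by_cases hp : parent G hG v z₁ = v
    · -- both adjacent to v
      have ha₁ : G.Adj v z₁ := adj_of_parent_eq G hG h₁v hp
      have ha₂ : G.Adj v z₂ := adj_of_parent_eq G hG h₂v (by rw [← hpar]; exact hp)
      by_cases h₁u : z₁ = u
      · have h₂u : z₂ ≠ u := fun h => hne (h₁u.trans h.symm)
        have h₂B : z₂ ∈ Bbr G v u := neighbor_mem_Bbr G hG huv ha₂ h₂u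
        have hb2 := hB.1 z₂ h₂B h₂v
        simp only [shiftSched, h₁u, h₂u, if_true, if_false, if_pos h₂B, if_pos ha₂,
          if_neg h₂u]
        omega
      · by_cases h₂u : z₂ = u
        · have h₁B : z₁ ∈ Bbr G v u := neighbor_mem_Bbr G hG huv ha₁ h₁u
          have hb1 := hB.1 z₁ h₁B h₁v
          simp only [shiftSched, h₂u, h₁u, if_true, if_false, if_pos h₁B, if_pos ha₁,
            if_neg h₁u]
          omega
        · have h₁B : z₁ ∈ Bbr G v u := neighbor_mem_Bbr G hG huv ha₁ h₁u
          have h₂B : z₂ ∈ Bbr G v u := neighbor_mem_Bbr G hG huv ha₂ h₂u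
          have hb := hB.2 z₁ h₁B z₂ h₂B h₁v h₂v hne hpar
          simp only [shiftSched, if_neg h₁u, if_neg h₂u, if_pos h₁B, if_pos h₂B,
            if_pos ha₁, if_pos ha₂]
          omega
    · -- parent ≠ v
      have hp₂ : parent G hG v z₂ ≠ v := by rw [← hpar]; exact hp
      have hnadj₁ : ¬ G.Adj v z₁ := fun h => hp (parent_adj G hG h)
      have hnadj₂ : ¬ G.Adj v z₂ := fun h => hp₂ (parent_adj G hG h)
      have h₁u : z₁ ≠ u := fun h => hnadj₁ (h ▸ huv.symm)
      have h₂u : z₂ ≠ u := fun h => hnadj₂ (h ▸ huv.symm)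
      by_cases h₁B : z₁ ∈ Bbr G v u
      · by_cases h₂B : z₂ ∈ Bbr G v u
        · have hb := hB.2 z₁ h₁B z₂ h₂B h₁v h₂v hne hpar
          simpa [shiftSched, h₁u, h₂u, h₁B, h₂B, hnadj₁, hnadj₂] using hb
        · have h₂A : z₂ ∈ Bbr G u v := (mem_Bbr_or G hG huv z₂).resolve_right h₂B
          exact absurd hpar (fun hh => hmixed z₁ z₂ h₁B h₂A h₂u hp hh)
      · have h₁A : z₁ ∈ Bbr G u v := (mem_Bbr_or G hG huv z₁).resolve_right h₁B
        by_cases h₂B : z₂ ∈ Bbr G v u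
        · exact absurd hpar.symm (fun hh => hmixed z₂ z₁ h₂B h₁A h₁u hp₂ hh)
        · have h₂A : z₂ ∈ Bbr G u v := (mem_Bbr_or G hG huv z₂).resolve_right h₂B
          have hpar' : parent G hG u z₁ = parent G hG u z₂ := by
            rw [← parent_cons G hG huv.symm h₁A h₁u, ← parent_cons G hG huv.symm h₂A h₂u]
            exact hpar
          have hb := hA.2 z₁ h₁A z₂ h₂A h₁u h₂u hne hpar'
          simpa [shiftSched, h₁u, h₂u, h₁B, h₂B] using hb

include hG in
lemma bTime_upper (w : V → V → ℝ) (ρ : ℝ) (hρ : 0 < ρ) {u v : V} (huv : G.Adj u v)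
    {σA σB : V → ℕ}
    (hA : Valid G hG σA u (Bbr G u v)) (hB : Valid G hG σB v (Bbr G v u)) :
    bTimeT G hG w ρ v ≤ max (ρ + sSup ((recvTime G hG w ρ σB v) '' (Bbr G v u)))
      (ρ + w v u + sSup ((recvTime G hG w ρ σA u) '' (Bbr G u v))) := by
  have hBu : u ∉ Bbr G v u := not_mem_Bbr_self G huv.ne'
  set MB := sSup ((recvTime G hG w ρ σB v) '' (Bbr G v u)) with hMB
  set MA := sSup ((recvTime G hG w ρ σA u) '' (Bbr G u v)) with hMA
  have hMB0 : 0 ≤ MB := le_csSup (((Bbr G v u).toFinite.image _).bddAbove)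
    ⟨v, self_mem_Bbr G v u, recvTime_self G hG w ρ σB v⟩
  have hMA0 : 0 ≤ MA := le_csSup (((Bbr G u v).toFinite.image _).bddAbove)
    ⟨u, self_mem_Bbr G u v, recvTime_self G hG w ρ σA u⟩
  set σ' := shiftSched G σA σB u v with hσ'
  have hval : Valid G hG σ' v Set.univ := shiftSched_valid G hG huv hA hB
  have hstep := bTime_le G hG w ρ (Set.mem_univ v) hval
  refine le_trans hstep (csSup_le ⟨_, ⟨v, trivial, rfl⟩⟩ ?_)
  rintro t ⟨z, -, rfl⟩
  by_cases hzv : z = v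
  · subst hzv
    rw [recvTime_self]
    exact le_max_of_le_left (by linarith)
  by_cases hzu : z = u
  · have hcalc : recvTime G hG w ρ σ' v u = (σ' u : ℝ) * ρ + w v u + 0 := by
      rw [recvTime_cons G hG w ρ σ' huv.symm (self_mem_Bbr G u v), recvTime_self]
    have hσu : σ' u = 1 := by simp [hσ', shiftSched]
    rw [hzu, hcalc, hσu]
    refine le_max_of_le_right ?_
    push_cast
    linarith
  rcases mem_Bbr_or G hG huv z with hzA | hzB
  · -- z on the u side
    have hvs : v ∉ (tPath G hG u z).support := not_mem_support_tPath G hG huv.ne hzA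
    have heq1 : recvTime G hG w ρ σ' v z
        = (σ' u : ℝ) * ρ + w v u + recvTime G hG w ρ σ' u z :=
      recvTime_cons G hG w ρ σ' huv.symm hzA
    have heq2 : recvTime G hG w ρ σ' u z = recvTime G hG w ρ σA u z := by
      apply recvTime_congr
      intro d hd
      have hd2t : d.toProd.2 ∈ (tPath G hG u z).support.tail := by
        rw [← Walk.map_snd_darts]; exact List.mem_map_of_mem hd
      have hd2 : d.toProd.2 ∈ (tPath G hG u z).support := by
        rw [Walk.support_eq_cons (tPath G hG u z)]; exact List.mem_cons_of_mem _ hd2t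
      have hd2u : d.toProd.2 ≠ u := by
        intro h
        have hnd := (tPath_isPath G hG u z).support_nodup
        rw [Walk.support_eq_cons (tPath G hG u z)] at hnd
        exact (List.nodup_cons.mp hnd).1 (h ▸ hd2t)
      have hd2A : d.toProd.2 ∈ Bbr G u v := support_mem_Bbr G hG hzA hd2 hd2u
      have hd2B : d.toProd.2 ∉ Bbr G v u := fun hh => not_mem_Bbr_of G hG huv hh hd2A
      simp [hσ', shiftSched, hd2u, hd2B]
    have hσu : σ' u = 1 := by simp [hσ', shiftSched]
    have hle : recvTime G hG w ρ σA u z ≤ MA :=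
      le_csSup (((Bbr G u v).toFinite.image _).bddAbove) ⟨z, hzA, rfl⟩
    rw [heq1, heq2, hσu]
    refine le_max_of_le_right ?_
    push_cast
    linarith
  · -- z on the v side
    have heq : recvTime G hG w ρ σ' v z = ρ + recvTime G hG w ρ σB v z := by
      apply recvTime_shift G hG w ρ hzv
      · intro c hvc hc
        have hcB : c ∈ Bbr G v u := support_mem_Bbr G hG hzB hc hvc.ne'
        have hcu : c ≠ u := fun h => hBu (h ▸ hcB)
        simp [hσ', shiftSched, hcu, hcB, hvc]
      · intro c hcv hnadj hc
        have hcB : c ∈ Bbr G v u := support_mem_Bbr G hG hzB hc hcv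
        have hcu : c ≠ u := fun h => hBu (h ▸ hcB)
        simp [hσ', shiftSched, hcu, hcB, hnadj]
    have hle : recvTime G hG w ρ σB v z ≤ MB :=
      le_csSup (((Bbr G v u).toFinite.image _).bddAbove) ⟨z, hzB, rfl⟩
    rw [heq]
    exact le_max_of_le_left (by linarith)

end Main

/-- If `(u,v) ∈ E(T)` and `b_time(u, B(u,v)) ≤ b_time(v, B(v,u))`,
then `b_time(v, T) ≤ b_time(u, T)`. -/
theorem stmt1 {V : Type*} [Fintype V] [DecidableEq V] (G : SimpleGraph V) (hG : G.IsTree)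
    (w : V → V → ℝ) (hsym : Wsymm w) (hpos : Wpos G w) (ρ : ℝ) (hρ : 0 < ρ)
    (u v : V) (huv : G.Adj u v)
    (hle : bTime G hG w ρ u (Bbr G u v) ≤ bTime G hG w ρ v (Bbr G v u)) :
    bTimeT G hG w ρ v ≤ bTimeT G hG w ρ u := by
  have hw : 0 < w u v := hpos u v huv
  have hlow := bTime_lower G hG w ρ hρ huv
  have hup : bTimeT G hG w ρ v ≤ ρ + w u v + bTime G hG w ρ v (Bbr G v u) := by
    by_contra hcon
    push_neg at hcon
    set tB := bTime G hG w ρ v (Bbr G v u) with htB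
    set ε := (bTimeT G hG w ρ v - (ρ + w u v + tB)) / 2 with hε
    have hεpos : 0 < ε := by
      rw [hε]; linarith
    obtain ⟨mB, hmBmem, hmBlt⟩ :=
      Real.lt_sInf_add_pos (bTime_set_nonempty G hG w ρ v (Bbr G v u)) hεpos
    obtain ⟨σB, hσB, rfl⟩ := hmBmem
    obtain ⟨mA, hmAmem, hmAlt⟩ :=
      Real.lt_sInf_add_pos (bTime_set_nonempty G hG w ρ u (Bbr G u v)) hεpos
    obtain ⟨σA, hσA, rfl⟩ := hmAmem
    have hupper := bTime_upper G hG w ρ hρ huv hσA hσB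
    have h1 : sSup ((recvTime G hG w ρ σB v) '' (Bbr G v u)) < tB + ε := hmBlt
    have h2 : sSup ((recvTime G hG w ρ σA u) '' (Bbr G u v)) <
        bTime G hG w ρ u (Bbr G u v) + ε := hmAlt
    have h3 : sSup ((recvTime G hG w ρ σA u) '' (Bbr G u v)) < tB + ε := by
      rw [htB]; exact lt_of_lt_of_le h2 (by linarith)
    have hwvu : w v u = w u v := hsym v u
    have hmax : max (ρ + sSup ((recvTime G hG w ρ σB v) '' (Bbr G v u)))
        (ρ + w v u + sSup ((recvTime G hG w ρ σA u) '' (Bbr G u v)))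
        < ρ + w u v + tB + ε := by
      apply max_lt <;> [linarith; linarith]
    have := lt_of_le_of_lt hupper hmax
    rw [hε] at this
    linarith [hcon]
  exact hup.trans hlow

end Postal
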